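/- In the setting of idempotent transport (E_I, E_J idempotents, X_{IJ} = E_I X_{IJ} E_J, X_{JI} = E_J X_{JI} E_I, pairwise orthogonal idempotents e_α ≤ E_I with X_{IJ}X_{JI} = ∑_α σ_α e_α, σ_α central units, ẽ_α := σ_α^{-1} X_{JI} e_α X_{IJ}): one has X_{IJ} ẽ_α = e_α X_{IJ} and X_{JI} e_α = ẽ_α X_{JI} for all α, and moreover X_{IJ} ẽ_α X_{JI} = σ_α e_α, so transporting twice returns the original idempotents. -/
import Mathlib


/-- The transported idempotent ẽ_α := σ_α⁻¹ · X_{JI} · e_α · X_{IJ}. -/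
def transported {R : Type*} [Ring R] (XIJ XJI eα σinv : R) : R :=
  σinv * XJI * eα * XIJ

/-- Idempotent transport: with E_I, E_J orthogonal idempotents, X_{IJ} = E_I X_{IJ} E_J,
X_{JI} = E_J X_{JI} E_I, (e_α) pairwise orthogonal idempotents ≤ E_I with
X_{IJ} X_{JI} = ∑_α σ_α e_α for central units σ_α, and ẽ_α := σ_α⁻¹ X_{JI} e_α X_{IJ}:
one has X_{IJ} ẽ_α = e_α X_{IJ}, X_{JI} e_α = ẽ_α X_{JI}, and X_{IJ} ẽ_α X_{JI} = σ_α e_α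
(so transporting twice returns the original idempotents). -/
theorem transported_intertwine {R : Type*} [Ring R] (EI EJ XIJ XJI : R)
    (hEI : EI * EI = EI) (hEJ : EJ * EJ = EJ)
    (hIJorth : EI * EJ = 0) (hJIorth : EJ * EI = 0)
    (hX : XIJ = EI * XIJ * EJ) (hX' : XJI = EJ * XJI * EI)
    {ι : Type*} [Fintype ι] (e : ι → R) (σ : ι → Rˣ)
    (he : ∀ α, e α * e α = e α)
    (horth : ∀ α β, α ≠ β → e α * e β = 0)
    (hle : ∀ α, e α * EI = e α ∧ EI * e α = e α)
    (hcentral : ∀ α (r : R), (σ α : R) * r = r * (σ α : R))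
    (hspec : XIJ * XJI = ∑ α, (σ α : R) * e α) :
    (∀ α, XIJ * transported XIJ XJI (e α) (((σ α)⁻¹ : Rˣ) : R) = e α * XIJ) ∧
    (∀ α, XJI * e α = transported XIJ XJI (e α) (((σ α)⁻¹ : Rˣ) : R) * XJI) ∧
    (∀ α, XIJ * transported XIJ XJI (e α) (((σ α)⁻¹ : Rˣ) : R) * XJI = (σ α : R) * e α) := by
  -- inverses are also central
  have hinvc : ∀ α (r : R), ((σ α)⁻¹ : Rˣ) * r = r * (((σ α)⁻¹ : Rˣ) : R) := by
    intro α r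
    calc (((σ α)⁻¹ : Rˣ) : R) * r
        = (((σ α)⁻¹ : Rˣ) : R) * r * ((σ α : R) * (((σ α)⁻¹ : Rˣ) : R)) := by
          rw [Units.mul_inv, mul_one]
      _ = (((σ α)⁻¹ : Rˣ) : R) * (r * (σ α : R)) * (((σ α)⁻¹ : Rˣ) : R) := by
          rw [mul_assoc, mul_assoc, mul_assoc]
      _ = (((σ α)⁻¹ : Rˣ) : R) * ((σ α : R) * r) * (((σ α)⁻¹ : Rˣ) : R) := by
          rw [hcentral]
      _ = r * (((σ α)⁻¹ : Rˣ) : R) := by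
          rw [← mul_assoc, Units.inv_mul, one_mul]
  -- sum hits e α from the right / left
  have hsumr : ∀ α, (∑ β, (σ β : R) * e β) * e α = (σ α : R) * e α := by
    intro α
    rw [Finset.sum_mul, Finset.sum_eq_single α]
    · rw [mul_assoc, he]
    · intro β _ hβ
      rw [mul_assoc, horth β α hβ, mul_zero]
    · intro h; exact absurd (Finset.mem_univ α) h
  have hsuml : ∀ α, e α * (∑ β, (σ β : R) * e β) = (σ α : R) * e α := by
    intro α
    rw [Finset.mul_sum, Finset.sum_eq_single α]
    · rw [← mul_assoc, ← hcentral, mul_assoc, he]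
    · intro β _ hβ
      rw [← mul_assoc, ← hcentral, mul_assoc, horth α β hβ.symm, mul_zero]
    · intro h; exact absurd (Finset.mem_univ α) h
  have h1 : ∀ α, XIJ * transported XIJ XJI (e α) (((σ α)⁻¹ : Rˣ) : R) = e α * XIJ := by
    intro α
    unfold transported
    calc XIJ * ((((σ α)⁻¹ : Rˣ) : R) * XJI * e α * XIJ)
        = XIJ * (((σ α)⁻¹ : Rˣ) : R) * (XJI * (e α * XIJ)) := by noncomm_ring
      _ = (((σ α)⁻¹ : Rˣ) : R) * XIJ * (XJI * (e α * XIJ)) := by rw [← hinvc]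
      _ = (((σ α)⁻¹ : Rˣ) : R) * ((XIJ * XJI) * e α) * XIJ := by noncomm_ring
      _ = (((σ α)⁻¹ : Rˣ) : R) * ((σ α : R) * e α) * XIJ := by rw [hspec, hsumr]
      _ = e α * XIJ := by rw [← mul_assoc, Units.inv_mul, one_mul]
  have h2 : ∀ α, XJI * e α = transported XIJ XJI (e α) (((σ α)⁻¹ : Rˣ) : R) * XJI := by
    intro α
    unfold transported
    symm
    calc (((σ α)⁻¹ : Rˣ) : R) * XJI * e α * XIJ * XJI
        = (((σ α)⁻¹ : Rˣ) : R) * (XJI * (e α * (XIJ * XJI))) := by noncomm_ring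
      _ = (((σ α)⁻¹ : Rˣ) : R) * (XJI * ((σ α : R) * e α)) := by rw [hspec, hsuml]
      _ = (((σ α)⁻¹ : Rˣ) : R) * ((σ α : R) * (XJI * e α)) := by
          rw [← mul_assoc XJI, ← hcentral, mul_assoc]
      _ = XJI * e α := by rw [← mul_assoc, Units.inv_mul, one_mul]
  have h3 : ∀ α, XIJ * transported XIJ XJI (e α) (((σ α)⁻¹ : Rˣ) : R) * XJI
      = (σ α : R) * e α := by
    intro α
    rw [h1 α, mul_assoc, hspec, hsuml]
  exact ⟨h1, h2, h3⟩
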